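/- Let E be a Frobenius class of triangles in a triangulated category K with quotient functor π: K → S(K;E). Two objects X, Y ∈ K satisfy π(X) ≅ π(Y) in S(K;E) if and only if there exist E-projective-injective objects C₁ and C₂ and an isomorphism X ⊕ C₁ ≅ Y ⊕ C₂ in K. -/

import Mathlib

/-!
Common definitions for formalizing "Relative stable categories and birationality"
(Balmer–Stevenson): proper classes of triangles in the sense of Beligiannis,
relative projectives/injectives, Frobenius classes, and abstract models of the
relative stable category together with Beligiannis' triangulation.
-/

noncomputable section

open CategoryTheory Limits Pretriangulated ZeroObject

universe v u v' u' v'' u'' v₁ u₁ v₂ u₂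

namespace RelStable

variable {K : Type u} [Category.{v} K] [Preadditive K] [HasZeroObject K]
  [HasShift K ℤ] [∀ n : ℤ, (CategoryTheory.shiftFunctor K n).Additive] [Pretriangulated K]

/-- `f` is an `E`-monomorphism: it occurs as the first map of a triangle in `E`. -/
def SMono (E : Set (Triangle K)) {X Y : K} (f : X ⟶ Y) : Prop :=
  ∃ (Z : K) (g : Y ⟶ Z) (h : Z ⟶ X⟦(1:ℤ)⟧), Triangle.mk f g h ∈ E

/-- `g` is an `E`-epimorphism: it occurs as the second map of a triangle in `E`. -/
def SEpi (E : Set (Triangle K)) {Y Z : K} (g : Y ⟶ Z) : Prop :=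
  ∃ (X : K) (f : X ⟶ Y) (h : Z ⟶ X⟦(1:ℤ)⟧), Triangle.mk f g h ∈ E

/-- `h` is an `E`-phantom: up to isomorphism of its target with a suspension, it
occurs as the third map of a triangle in `E`. -/
def SPhantom (E : Set (Triangle K)) {Z W : K} (h : Z ⟶ W) : Prop :=
  ∃ (X Y : K) (f : X ⟶ Y) (g : Y ⟶ Z) (h' : Z ⟶ X⟦(1:ℤ)⟧) (e : (X⟦(1:ℤ)⟧ : K) ≅ W),
    Triangle.mk f g h' ∈ E ∧ h = h' ≫ e.hom

/-- `P` is `E`-projective: `Hom(P,-)` takes triangles in `E` to short exact sequences. -/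
def EProjective (E : Set (Triangle K)) (P : K) : Prop :=
  ∀ T ∈ E,
    (∀ a : P ⟶ T.obj₁, a ≫ T.mor₁ = 0 → a = 0) ∧
    (∀ b : P ⟶ T.obj₂, b ≫ T.mor₂ = 0 → ∃ a : P ⟶ T.obj₁, a ≫ T.mor₁ = b) ∧
    (∀ c : P ⟶ T.obj₃, ∃ b : P ⟶ T.obj₂, b ≫ T.mor₂ = c)

/-- `I` is `E`-injective: `Hom(-,I)` takes triangles in `E` to short exact sequences. -/
def EInjective (E : Set (Triangle K)) (I : K) : Prop :=
  ∀ T ∈ E,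
    (∀ a : T.obj₃ ⟶ I, T.mor₂ ≫ a = 0 → a = 0) ∧
    (∀ b : T.obj₂ ⟶ I, T.mor₁ ≫ b = 0 → ∃ a : T.obj₃ ⟶ I, T.mor₂ ≫ a = b) ∧
    (∀ c : T.obj₁ ⟶ I, ∃ b : T.obj₂ ⟶ I, T.mor₁ ≫ b = c)

/-- `K` has enough `E`-projectives: every object admits an `E`-projective precover. -/
def EnoughProjectives (E : Set (Triangle K)) : Prop :=
  ∀ X : K, ∃ (P : K) (p : P ⟶ X), EProjective E P ∧ SEpi E p

/-- `K` has enough `E`-injectives: every object admits an `E`-injective preenvelope. -/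
def EnoughInjectives (E : Set (Triangle K)) : Prop :=
  ∀ X : K, ∃ (I : K) (i : X ⟶ I), EInjective E I ∧ SMono E i

/-- The direct sum of two triangles. -/
def sumTriangle [HasBinaryBiproducts K] (T₁ T₂ : Triangle K) : Triangle K :=
  Triangle.mk (biprod.map T₁.mor₁ T₂.mor₁) (biprod.map T₁.mor₂ T₂.mor₂)
    (biprod.desc (T₁.mor₃ ≫ (shiftFunctor K (1:ℤ)).map biprod.inl)
      (T₂.mor₃ ≫ (shiftFunctor K (1:ℤ)).map biprod.inr))

/-- A proper class of triangles in the sense of Beligiannis: a class of distinguished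
triangles closed under isomorphism, suspension, finite direct sums and retracts,
containing the trivial triangles, whose `E`-monomorphisms are closed under homotopy
pushout, whose `E`-epimorphisms are closed under homotopy pullback, and which is
saturated. -/
structure IsProperClass [HasBinaryBiproducts K] (E : Set (Triangle K)) : Prop where
  subset_dist : ∀ T ∈ E, T ∈ (distTriang K)
  iso_closed : ∀ (T₁ T₂ : Triangle K), (T₁ ≅ T₂) → T₁ ∈ E → T₂ ∈ E
  shift_closed : ∀ T ∈ E, (Triangle.shiftFunctor K (1 : ℤ)).obj T ∈ E
  sum_closed : ∀ T₁ T₂ : Triangle K, T₁ ∈ E → T₂ ∈ E → sumTriangle T₁ T₂ ∈ E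
  retract_closed : ∀ (T₁ T₂ : Triangle K) (i : T₁ ⟶ T₂) (r : T₂ ⟶ T₁),
    i ≫ r = 𝟙 T₁ → T₂ ∈ E → T₁ ∈ E
  contractible₁ : ∀ X : K, contractibleTriangle X ∈ E
  contractible₂ : ∀ Y : K,
    Triangle.mk (0 : (0 : K) ⟶ Y) (𝟙 Y) (0 : Y ⟶ ((0 : K)⟦(1:ℤ)⟧)) ∈ E
  mono_pushout : ∀ {X Y X' : K} (f : X ⟶ Y), SMono E f → ∀ (t : X ⟶ X')
    (W : K) (u : Y ⊞ X' ⟶ W) (v : W ⟶ X⟦(1:ℤ)⟧),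
    Triangle.mk (biprod.lift f t) u v ∈ (distTriang K) → SMono E (biprod.inr ≫ u)
  epi_pullback : ∀ {Y Z Z' : K} (g : Y ⟶ Z), SEpi E g → ∀ (t : Z' ⟶ Z)
    (W : K) (w : W ⟶ Y ⊞ Z') (v : Z ⟶ W⟦(1:ℤ)⟧),
    Triangle.mk w (biprod.desc g t) v ∈ (distTriang K) → SEpi E (w ≫ biprod.snd)
  saturated : ∀ {Y Z : K} (g : Y ⟶ Z), SEpi E g → ∀ {W : K} (k : Z ⟶ W),
    SPhantom E (g ≫ k) → SPhantom E k

/-- A Frobenius class of triangles: enough projectives, enough injectives, and the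
projectives coincide with the injectives. -/
structure IsFrobenius (E : Set (Triangle K)) : Prop where
  enough_proj : EnoughProjectives E
  enough_inj : EnoughInjectives E
  proj_eq_inj : ∀ X : K, EProjective E X ↔ EInjective E X

/-- A morphism factoring through an `E`-projective(-injective) object; these are the
morphisms killed by the quotient functor to the relative stable category. -/
def FactorsThroughProj (E : Set (Triangle K)) {X Y : K} (f : X ⟶ Y) : Prop :=
  ∃ (P : K) (a : X ⟶ P) (b : P ⟶ Y), EProjective E P ∧ a ≫ b = f

/-- The image of a triangle under a functor equipped with a commutation with shift. -/
def mapTri {C : Type u'} {D : Type v'} [Category C] [Category D]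
    [HasShift C ℤ] [HasShift D ℤ] (F : C ⥤ D) (hc : F.CommShift ℤ) (T : Triangle C) :
    Triangle D :=
  Triangle.mk (F.map T.mor₁) (F.map T.mor₂)
    (F.map T.mor₃ ≫ (Functor.CommShift.commShiftIso (self := hc) F (1:ℤ)).hom.app T.obj₁)

/-- An exact (triangulated) functor: additive, commutes with the shift, and sends
distinguished triangles to distinguished triangles. -/
def IsExactFunctor {C : Type u'} {D : Type v'} [Category C] [Category D]
    [Preadditive C] [Preadditive D] [HasZeroObject C] [HasZeroObject D]
    [HasShift C ℤ] [HasShift D ℤ]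
    [∀ n : ℤ, (shiftFunctor C n).Additive] [∀ n : ℤ, (shiftFunctor D n).Additive]
    [Pretriangulated C] [Pretriangulated D] (F : C ⥤ D) : Prop :=
  F.Additive ∧ ∃ hc : F.CommShift ℤ, ∀ T ∈ (distTriang C), mapTri F hc T ∈ (distTriang D)

/-- An abstract model of the relative stable category `S(K;E) = K/proj(E)` together
with Beligiannis' triangulation: a pretriangulated category `S` and an additive
quotient functor `π : K ⥤ S` killing exactly the maps factoring through `proj(E)`,
such that the suspension of `S` is computed by cofibres of `inj(E)`-preenvelopes,
image-triangles of triangles of `E` are distinguished, and every distinguished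
triangle of `S` is isomorphic to such an image-triangle. -/
structure StableModel (E : Set (Triangle K)) where
  S : Type u
  [cat : Category.{v} S]
  [preadd : Preadditive S]
  [zobj : HasZeroObject S]
  [hshift : HasShift S ℤ]
  [shiftAdd : ∀ n : ℤ, (shiftFunctor S n).Additive]
  [pretri : Pretriangulated S]
  π : K ⥤ S
  [πAdd : π.Additive]
  π_full : π.Full
  π_essSurj : π.EssSurj
  π_map_zero_iff : ∀ {X Y : K} (f : X ⟶ Y), π.map f = 0 ↔ FactorsThroughProj E f
  susp : ∀ T ∈ E, EInjective E T.obj₂ →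
    Nonempty (π.obj T.obj₃ ≅ (π.obj T.obj₁)⟦(1:ℤ)⟧)
  imageTriangle_distinguished : ∀ T ∈ E,
    ∃ h' : π.obj T.obj₃ ⟶ (π.obj T.obj₁)⟦(1:ℤ)⟧,
      Triangle.mk (π.map T.mor₁) (π.map T.mor₂) h' ∈ (distTriang S)
  distinguished_iso_image : ∀ T' ∈ (distTriang S), ∃ T ∈ E,
    ∃ h' : π.obj T.obj₃ ⟶ (π.obj T.obj₁)⟦(1:ℤ)⟧,
      Triangle.mk (π.map T.mor₁) (π.map T.mor₂) h' ∈ (distTriang S) ∧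
      Nonempty (T' ≅ Triangle.mk (π.map T.mor₁) (π.map T.mor₂) h')

attribute [instance] StableModel.cat StableModel.preadd StableModel.zobj
  StableModel.hshift StableModel.shiftAdd StableModel.pretri StableModel.πAdd


/-- A morphism factoring through an `E`-injective object. -/
def FactorsThroughInj (E : Set (Triangle K)) {X Y : K} (f : X ⟶ Y) : Prop :=
  ∃ (I : K) (a : X ⟶ I) (b : I ⟶ Y), EInjective E I ∧ a ≫ b = f

/-- The `F`-split triangles: distinguished triangles whose third map is killed by `F`. -/
def splitClass {C : Type u'} {D : Type v'} [Category C] [Category D] [Preadditive C]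
    [HasZeroObject C] [HasShift C ℤ] [∀ n : ℤ, (shiftFunctor C n).Additive]
    [Pretriangulated C] [Limits.HasZeroMorphisms D] (F : C ⥤ D) : Set (Triangle C) :=
  {T | T ∈ (distTriang C) ∧ F.map T.mor₃ = 0}


/-- `E`-projective objects are closed under retracts. -/
lemma eProjective_of_retract (E : Set (Triangle K)) {Z Q : K}
    (hQ : EProjective E Q) (a : Z ⟶ Q) (b : Q ⟶ Z) (hab : a ≫ b = 𝟙 Z) :
    EProjective E Z := by
  intro T hT
  obtain ⟨h1, h2, h3⟩ := hQ T hT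
  refine ⟨?_, ?_, ?_⟩
  · intro c hc
    have hbc : b ≫ c = 0 := h1 _ (by rw [Category.assoc, hc, comp_zero])
    have : c = a ≫ b ≫ c := by rw [← Category.assoc, hab, Category.id_comp]
    rw [this, hbc, comp_zero]
  · intro c hc
    obtain ⟨d, hd⟩ := h2 (b ≫ c) (by rw [Category.assoc, hc, comp_zero])
    exact ⟨a ≫ d, by rw [Category.assoc, hd, ← Category.assoc, hab, Category.id_comp]⟩
  · intro c
    obtain ⟨d, hd⟩ := h3 (b ≫ c)
    exact ⟨a ≫ d, by rw [Category.assoc, hd, ← Category.assoc, hab, Category.id_comp]⟩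

/-- A split monomorphism in a pretriangulated category exhibits its target as a
biproduct of its source and a complement. -/
lemma splitMono_biprod [HasBinaryBiproducts K] {X B : K} (u : X ⟶ B) (r : B ⟶ X)
    (hur : u ≫ r = 𝟙 X) :
    ∃ (Z : K) (q : B ⟶ Z) (s : Z ⟶ B), u ≫ q = 0 ∧ s ≫ q = 𝟙 Z ∧
      Nonempty ((X ⊞ Z) ≅ B) := by
  obtain ⟨Z, q, δ, hT⟩ := distinguished_cocone_triangle u
  have huq : u ≫ q = 0 := comp_distTriang_mor_zero₁₂ _ hT
  have hδ : δ = 0 := by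
    have h1 := comp_distTriang_mor_zero₃₁ _ hT
    change δ ≫ (shiftFunctor K (1:ℤ)).map u = 0 at h1
    have h2 : δ ≫ (shiftFunctor K (1:ℤ)).map u ≫ (shiftFunctor K (1:ℤ)).map r = 0 := by
      rw [← Category.assoc, h1, zero_comp]
    rw [← Functor.map_comp, hur] at h2
    simpa using h2
  obtain ⟨s₀, hs₀⟩ : ∃ s₀ : Z ⟶ B, 𝟙 Z = s₀ ≫ q := Triangle.coyoneda_exact₃ _ hT (𝟙 Z)
    (by exact (Category.id_comp _).trans hδ)
  set s : Z ⟶ B := s₀ ≫ (𝟙 B - r ≫ u) with hs_def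
  have hsq : s ≫ q = 𝟙 Z := by
    simp [hs_def, Preadditive.comp_sub, Preadditive.sub_comp, huq, ← hs₀]
  have hsr : s ≫ r = 0 := by
    simp [hs_def, Preadditive.comp_sub, Preadditive.sub_comp, hur]
  set φ : X ⊞ Z ⟶ B := biprod.desc u s with hφ_def
  set ψ : B ⟶ X ⊞ Z := biprod.lift r q with hψ_def
  have hφψ : φ ≫ ψ = 𝟙 (X ⊞ Z) := by
    apply biprod.hom_ext' <;> apply biprod.hom_ext <;>
      simp [hφ_def, hψ_def, hur, huq, hsq, hsr]
  have huψφ : u ≫ ψ ≫ φ = u := by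
    simp [hψ_def, hφ_def, reassoc_of% hur, reassoc_of% huq]
  have hψφq : (ψ ≫ φ) ≫ q = q := by
    simp [hψ_def, hφ_def, hsq, huq]
  set ε : B ⟶ B := 𝟙 B - ψ ≫ φ with hε_def
  have huε : u ≫ ε = 0 := by
    simp only [hε_def, Preadditive.comp_sub, Category.comp_id, huψφ, sub_self]
  obtain ⟨t, ht⟩ : ∃ t : Z ⟶ B, ε = q ≫ t := Triangle.yoneda_exact₂ _ hT ε huε
  have hεq : ε ≫ q = 0 := by
    simp only [hε_def, Preadditive.sub_comp, Category.id_comp, hψφq, sub_self]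
  have htq : t ≫ q = 0 := by
    have : t ≫ q = s ≫ (ε ≫ q) := by
      rw [ht, ← Category.assoc, ← Category.assoc, hsq, Category.id_comp]
    rw [this, hεq, comp_zero]
  obtain ⟨w, hw⟩ : ∃ w : Z ⟶ X, t = w ≫ u := Triangle.coyoneda_exact₂ _ hT t htq
  have hε2 : ε ≫ ε = 0 := by
    rw [ht, hw]
    simp [reassoc_of% huq]
  have hεidem : ε ≫ ε = ε := by
    have hθθ : (ψ ≫ φ) ≫ ψ ≫ φ = ψ ≫ φ := by
      rw [Category.assoc, ← Category.assoc φ ψ φ, hφψ, Category.id_comp]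
    simp only [hε_def, Preadditive.sub_comp, Preadditive.comp_sub, Category.id_comp,
      Category.comp_id, hθθ]
    abel
  have hψφ : ψ ≫ φ = 𝟙 B := by
    have : ε = 0 := by rw [← hεidem, hε2]
    rw [hε_def] at this
    rw [← sub_eq_zero]
    rw [← neg_sub]
    rw [this, neg_zero]
  exact ⟨Z, q, s, huq, hsq, ⟨⟨φ, ψ, hφψ, hψφ⟩⟩⟩

/-- Lemma 5.2: two objects have isomorphic images in the relative stable category if
and only if they are stably isomorphic, i.e. isomorphic after adding
`E`-projective-injective summands. -/
theorem statement8 {K : Type u} [Category.{v} K] [Preadditive K] [HasZeroObject K]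
    [HasShift K ℤ] [∀ n : ℤ, (shiftFunctor K n).Additive] [Pretriangulated K]
    [HasBinaryBiproducts K]
    (E : Set (Triangle K)) (hE : IsProperClass E) (hFrob : IsFrobenius E)
    (D : StableModel E) (X Y : K) :
    Nonempty (D.π.obj X ≅ D.π.obj Y) ↔
      ∃ C₁ C₂ : K, EProjective E C₁ ∧ EProjective E C₂ ∧
        Nonempty ((X ⊞ C₁) ≅ (Y ⊞ C₂)) := by
  constructor
  · rintro ⟨φ⟩
    obtain ⟨f, hf⟩ := D.π_full.map_surjective φ.hom
    obtain ⟨g, hg⟩ := D.π_full.map_surjective φ.inv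
    have h1 : D.π.map (𝟙 X - f ≫ g) = 0 := by
      rw [Functor.map_sub, Functor.map_comp, D.π.map_id, hf, hg, φ.hom_inv_id, sub_self]
    obtain ⟨P, α, β, hP, hαβ⟩ := (D.π_map_zero_iff _).1 h1
    set u : X ⟶ Y ⊞ P := biprod.lift f α with hu_def
    have hur : u ≫ biprod.desc g β = 𝟙 X := by
      rw [hu_def, biprod.lift_desc, hαβ, add_sub_cancel]
    obtain ⟨Z, q, s, huq, hsq, ⟨e⟩⟩ := splitMono_biprod u _ hur
    -- `π` kills `inl ≫ q`
    have hinlq : D.π.map (biprod.inl ≫ q) = 0 := by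
      have hsplit : u = f ≫ biprod.inl + α ≫ biprod.inr := by
        rw [hu_def]; apply biprod.hom_ext <;> simp
      have h0 : D.π.map f ≫ D.π.map (biprod.inl ≫ q)
          + D.π.map (α ≫ biprod.inr ≫ q) = 0 := by
        rw [← Functor.map_comp, ← Category.assoc f, ← Category.assoc α,
          ← Functor.map_add, ← Preadditive.add_comp, ← hsplit, huq, Functor.map_zero]
      have hαz : D.π.map (α ≫ biprod.inr ≫ q) = 0 :=
        (D.π_map_zero_iff _).2 ⟨P, α, biprod.inr ≫ q, hP, rfl⟩
      rw [hαz, add_zero, hf] at h0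
      calc D.π.map (biprod.inl ≫ q)
          = φ.inv ≫ φ.hom ≫ D.π.map (biprod.inl ≫ q) := by
            rw [← Category.assoc, φ.inv_hom_id, Category.id_comp]
        _ = 0 := by rw [h0, comp_zero]
    -- hence `π Z ≅ 0`, i.e. `𝟙 Z` factors through a projective
    have hZ0 : D.π.map (𝟙 Z) = 0 := by
      have htot : (𝟙 (Y ⊞ P) : Y ⊞ P ⟶ Y ⊞ P)
          = biprod.fst ≫ biprod.inl + biprod.snd ≫ biprod.inr := biprod.total.symm
      have hdecomp : 𝟙 Z = (s ≫ biprod.fst) ≫ (biprod.inl ≫ q)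
          + (s ≫ biprod.snd) ≫ (biprod.inr ≫ q) := by
        rw [← hsq]
        calc s ≫ q = s ≫ 𝟙 (Y ⊞ P) ≫ q := by rw [Category.id_comp]
          _ = _ := by
              rw [htot, Preadditive.add_comp, Preadditive.comp_add]
              simp only [Category.assoc]
      rw [hdecomp, Functor.map_add, Functor.map_comp, hinlq, comp_zero,
        (D.π_map_zero_iff _).2 ⟨P, s ≫ biprod.snd, biprod.inr ≫ q, hP, rfl⟩, zero_add]
    obtain ⟨Q, a, b, hQ, hab⟩ := (D.π_map_zero_iff _).1 hZ0
    exact ⟨Z, P, eProjective_of_retract E hQ a b hab, hP, ⟨e⟩⟩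
  · rintro ⟨C₁, C₂, hC₁, hC₂, ⟨e⟩⟩
    set a : X ⟶ Y := biprod.inl ≫ e.hom ≫ biprod.fst with ha_def
    set b : Y ⟶ X := biprod.inl ≫ e.inv ≫ biprod.fst with hb_def
    have key : ∀ (W W' C : K) (hC : EProjective E C) (i : W ⟶ W' ⊞ C)
        (j : W' ⊞ C ⟶ W) (hij : i ≫ j = 𝟙 W),
        D.π.map ((i ≫ biprod.fst) ≫ (biprod.inl ≫ j)) = 𝟙 (D.π.obj W) := by
      intro W W' C hC i j hij
      have htot : (𝟙 (W' ⊞ C) : W' ⊞ C ⟶ W' ⊞ C)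
          = biprod.fst ≫ biprod.inl + biprod.snd ≫ biprod.inr := biprod.total.symm
      have hsum : (i ≫ biprod.fst) ≫ (biprod.inl ≫ j)
          + (i ≫ biprod.snd) ≫ (biprod.inr ≫ j) = 𝟙 W := by
        rw [← hij]
        calc _ = i ≫ (biprod.fst ≫ biprod.inl + biprod.snd ≫ biprod.inr) ≫ j := by
              rw [Preadditive.add_comp, Preadditive.comp_add]
              simp only [Category.assoc]
          _ = i ≫ j := by rw [← htot, Category.id_comp]
      have hz : D.π.map ((i ≫ biprod.snd) ≫ (biprod.inr ≫ j)) = 0 :=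
        (D.π_map_zero_iff _).2 ⟨C, i ≫ biprod.snd, biprod.inr ≫ j, hC, rfl⟩
      have h4 := congrArg D.π.map hsum
      rw [Functor.map_add, hz, add_zero] at h4
      exact h4.trans (D.π.map_id W)
    refine ⟨⟨D.π.map a, D.π.map b, ?_, ?_⟩⟩
    · rw [← Functor.map_comp]
      have : a ≫ b = (biprod.inl ≫ e.hom ≫ biprod.fst) ≫ (biprod.inl ≫ e.inv ≫ biprod.fst) := by
        rw [ha_def, hb_def]
      rw [this]
      have := key X Y C₂ hC₂ (biprod.inl ≫ e.hom) (e.inv ≫ biprod.fst)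
        (by rw [Category.assoc, ← Category.assoc e.hom, e.hom_inv_id, Category.id_comp,
          biprod.inl_fst])
      simpa only [Category.assoc] using this
    · rw [← Functor.map_comp]
      have : b ≫ a = (biprod.inl ≫ e.inv ≫ biprod.fst) ≫ (biprod.inl ≫ e.hom ≫ biprod.fst) := by
        rw [ha_def, hb_def]
      rw [this]
      have := key Y X C₁ hC₁ (biprod.inl ≫ e.inv) (e.hom ≫ biprod.fst)
        (by rw [Category.assoc, ← Category.assoc e.inv, e.inv_hom_id, Category.id_comp,
          biprod.inl_fst])
      simpa only [Category.assoc] using this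


end RelStable
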